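/- Let A_v and B_v be the (d×d) matrices of the 'delta-potential' boundary conditions: A_v has rows (1,−1,0,…,0), (0,1,−1,…,0), …, (0,…,1,−1), and last row (0,…,0,k) for a real number k; B_v has all rows zero except the last row which is (1,1,…,1). Then every diagonal unitary matrix U leaving both Ker A_v and Ker B_v invariant is a scalar multiple of the identity, U = e^{iφ}·I. -/

import Mathlib

/-- The matrix `A_v` of the delta-potential boundary conditions of strength `k`. -/
def deltaA (d : ℕ) (k : ℝ) : Matrix (Fin d) (Fin d) ℂ :=
  Matrix.of fun i j =>
    if (i : ℕ) = d - 1 then (if (j : ℕ) = d - 1 then (k : ℂ) else 0)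
    else if j = i then 1 else if (j : ℕ) = (i : ℕ) + 1 then -1 else 0

/-- The matrix `B_v` of the delta-potential boundary conditions: last row all ones. -/
def deltaB (d : ℕ) : Matrix (Fin d) (Fin d) ℂ :=
  Matrix.of fun i _ => if (i : ℕ) = d - 1 then 1 else 0

/-- Every diagonal unitary matrix leaving both `Ker A_v` and `Ker B_v` invariant is a
scalar multiple `e^{iφ}·I` of the identity. -/
theorem stmt_13 (d : ℕ) (hd : 2 ≤ d) (k : ℝ) (U : Matrix (Fin d) (Fin d) ℂ)
    (hUdiag : ∀ i j : Fin d, i ≠ j → U i j = 0)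
    (hU : U ∈ Matrix.unitaryGroup (Fin d) ℂ)
    (hkerA : (LinearMap.ker (deltaA d k).mulVecLin).map U.mulVecLin ≤
      LinearMap.ker (deltaA d k).mulVecLin)
    (hkerB : (LinearMap.ker (deltaB d).mulVecLin).map U.mulVecLin ≤
      LinearMap.ker (deltaB d).mulVecLin) :
    ∃ φ : ℝ, U = Complex.exp (φ * Complex.I) • (1 : Matrix (Fin d) (Fin d) ℂ) := by
  have hd0 : 0 < d := by omega
  set r : Fin d := ⟨d - 1, by omega⟩ with hr
  -- all diagonal entries are equal
  have hdiageq : ∀ i j : Fin d, U i i = U j j := by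
    intro i j
    rcases eq_or_ne i j with rfl | hij
    · rfl
    · set x : Fin d → ℂ := Pi.single i 1 - Pi.single j 1 with hx
      have hxker : x ∈ LinearMap.ker (deltaB d).mulVecLin := by
        rw [LinearMap.mem_ker, Matrix.mulVecLin_apply, hx, Matrix.mulVec_sub]
        funext c
        simp [Matrix.mulVec_single, deltaB]
      have hUx : U.mulVecLin x ∈ LinearMap.ker (deltaB d).mulVecLin :=
        hkerB (Submodule.mem_map_of_mem hxker)
      rw [LinearMap.mem_ker, Matrix.mulVecLin_apply] at hUx
      have h0 : (deltaB d).mulVec (U.mulVecLin x) r = 0 := by rw [hUx]; rfl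
      have hUxc : U.mulVecLin x = fun c => U c i - U c j := by
        rw [Matrix.mulVecLin_apply, hx, Matrix.mulVec_sub]
        funext c
        simp [Matrix.mulVec_single]
      rw [hUxc] at h0
      have hsum : ∑ c : Fin d, (U c i - U c j) = 0 := by
        rw [Matrix.mulVec, dotProduct] at h0
        simpa [deltaB, hr] using h0
      rw [Finset.sum_sub_distrib] at hsum
      have h1 : ∑ c : Fin d, U c i = U i i :=
        Finset.sum_eq_single i (fun b _ hb => hUdiag b i hb) (by simp)
      have h2 : ∑ c : Fin d, U c j = U j j :=
        Finset.sum_eq_single j (fun b _ hb => hUdiag b j hb) (by simp)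
      rw [h1, h2] at hsum
      linear_combination hsum
  -- diagonal entry has modulus 1
  set i0 : Fin d := ⟨0, hd0⟩ with hi0
  set u : ℂ := U i0 i0 with hu
  have hunit : star U * U = 1 := hU.1
  have hentry : (star U * U) i0 i0 = 1 := by rw [hunit]; simp
  have hsum1 : ∑ c : Fin d, star (U c i0) * U c i0 = 1 := by
    simpa [Matrix.mul_apply, Matrix.conjTranspose_apply] using hentry
  have hnorm : star u * u = 1 := by
    have h := Finset.sum_eq_single (s := Finset.univ)
      (f := fun c : Fin d => star (U c i0) * U c i0) i0
      (fun b _ hb => by simp [hUdiag b i0 hb]) (by simp)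
    rw [← hsum1, h]
  have habs : ‖u‖ = 1 := by
    have h2 : Complex.normSq u = 1 := by
      have : (Complex.normSq u : ℂ) = 1 := by
        rw [Complex.normSq_eq_conj_mul_self]; simpa using hnorm
      exact_mod_cast this
    have := Complex.sq_norm u
    nlinarith [norm_nonneg u]
  refine ⟨Complex.arg u, ?_⟩
  have hexp : Complex.exp (↑(Complex.arg u) * Complex.I) = u := by
    have := Complex.norm_mul_exp_arg_mul_I u
    rwa [habs, Complex.ofReal_one, one_mul] at this
  ext i j
  rcases eq_or_ne i j with rfl | hij
  · simp [hexp, hdiageq i i0]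
    exact hu.symm
  · simp [hUdiag i j hij, Matrix.one_apply_ne hij]
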